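/- For every n ∈ ℤ and every family (Y_p)_{p∈I} of objects of T, the canonical morphism ⊕_{p∈I} τ_{≤n} Y_p → τ_{≤n}(⊕_{p∈I} Y_p) is an isomorphism; that is, the truncation functors τ_{≤n} associated with the extended aisle T_{≤0} commute with arbitrary coproducts. (Key step of Lemma A.2.) -/

import Mathlib

/-!
Setting: `T` is a compactly generated triangulated category with suspension
functor `S = ⟦1⟧` admitting arbitrary (small) coproducts, `U ⊆ T_c` is a left
aisle in the full subcategory `T_c` of compact objects, and `T_{≤0}` is the
smallest strictly full subcategory of `T` containing `U` and stable under
arbitrary coproducts and under extensions.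
-/

namespace CYPaper

open CategoryTheory CategoryTheory.Limits CategoryTheory.Pretriangulated

universe v u

variable (T : Type u) [Category.{v} T] [HasZeroObject T] [Preadditive T]
  [HasShift T ℤ] [∀ n : ℤ, (shiftFunctor T n).Additive]
  [Pretriangulated T] [HasCoproducts.{v} T]

instance : HasColimitsOfShape (Discrete ℕ) T :=
  hasColimitsOfShape_of_equivalence (Discrete.equivalence Equiv.ulift.{v, 0})

/-- An object `C` is compact if `Hom(C, −)` (as an additive functor) commutes with
arbitrary (small) coproducts. -/
def IsCompactObj (C : T) : Prop :=
  ∀ I : Type v,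
    PreservesColimitsOfShape (Discrete I) (preadditiveCoyoneda.obj (Opposite.op C))

/-- The class of compact objects, i.e. the full triangulated subcategory `T_c`. -/
def Compacts : Set T := {C | IsCompactObj T C}

/-- `T` is compactly generated: there is a set `G` of compact objects such that an
object `X` is zero whenever `Hom(S^n G, X) = 0` for all `G ∈ G` and all `n : ℤ`. -/
def CompactlyGenerated : Prop :=
  ∃ G : Set T, Small.{v} ↥G ∧ (∀ C ∈ G, IsCompactObj T C) ∧
    ∀ X : T, (∀ C ∈ G, ∀ n : ℤ, ∀ f : C⟦n⟧ ⟶ X, f = 0) → IsZero X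

/-- A left aisle in the (strictly) full subcategory of `T` with class of objects `A`:
a strictly full additive subcategory stable under the suspension and under
extensions, whose inclusion admits a right adjoint (expressed by the existence of
coreflections). -/
structure LeftAisle (A : Set T) where
  carrier : Set T
  subset : carrier ⊆ A
  iso_closed : ∀ {X Y : T}, (X ≅ Y) → Y ∈ A → X ∈ carrier → Y ∈ carrier
  zero_mem : ∀ X : T, IsZero X → X ∈ A → X ∈ carrier
  sum_mem : ∀ {X Y : T}, X ∈ carrier → Y ∈ carrier →
    ∀ c : BinaryCofan X Y, Nonempty (IsColimit c) → c.pt ∈ A → c.pt ∈ carrier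
  shift_mem : ∀ X ∈ carrier, X⟦(1 : ℤ)⟧ ∈ carrier
  ext_mem : ∀ Tr : Triangle T, Tr ∈ (distTriang T) →
    Tr.obj₁ ∈ carrier → Tr.obj₃ ∈ carrier → Tr.obj₂ ∈ A → Tr.obj₂ ∈ carrier
  coreflect : ∀ X ∈ A, ∃ (U₀ : T) (_ : U₀ ∈ carrier) (ε : U₀ ⟶ X),
    ∀ R ∈ carrier, Function.Bijective fun g : R ⟶ U₀ => g ≫ ε

/-- The smallest strictly full subcategory of `T` containing `U` and stable under
arbitrary (small) coproducts and under extensions. -/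
inductive aisleGen (U : Set T) : T → Prop
  | of (X : T) (hX : X ∈ U) : aisleGen U X
  | iso (X Y : T) (e : X ≅ Y) (hX : aisleGen U X) : aisleGen U Y
  | coprod {I : Type v} (Y : I → T) (hY : ∀ i, aisleGen U (Y i)) : aisleGen U (∐ Y)
  | ext (Tr : Triangle T) (hT : Tr ∈ (distTriang T))
      (h₁ : aisleGen U Tr.obj₁) (h₃ : aisleGen U Tr.obj₃) : aisleGen U Tr.obj₂

/-- `T_{≤0}`. -/
def TLe0 (U : Set T) : Set T := {X | aisleGen T U X}

/-- `T_{≤n} := S^{−n} T_{≤0}`. -/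
def TLe (U : Set T) (n : ℤ) : Set T := {X | X⟦n⟧ ∈ TLe0 T U}

/-- `T_{>n} := (T_{≤n})^⊥`. -/
def TGt (U : Set T) (n : ℤ) : Set T := {Y | ∀ Z ∈ TLe T U n, ∀ f : Z ⟶ Y, f = 0}

/-- A truncation triangle `τ_{≤n} X → X → τ_{>n} X → S (τ_{≤n} X)` of `X` with
respect to the left aisle `T_{≤n}` on `T`. -/
structure TruncTriangle (U : Set T) (n : ℤ) (X : T) where
  low : T
  high : T
  ι : low ⟶ X
  π : X ⟶ high
  δ : high ⟶ low⟦(1 : ℤ)⟧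
  low_mem : low ∈ TLe T U n
  high_mem : high ∈ TGt T U n
  dist : Triangle.mk ι π δ ∈ (distTriang T)

/-- Data computing `H^n X = τ_{≥n} τ_{≤n} X = τ_{>n−1} τ_{≤n} X`: a truncation
triangle `t` of `X` at level `n` together with a truncation triangle `s` of
`τ_{≤n} X = t.low` at level `n − 1`; then `H^n X = s.high`. -/
structure HomologyData (U : Set T) (n : ℤ) (X : T) where
  t : TruncTriangle T U n X
  s : TruncTriangle T U (n - 1) t.low

/-- The morphism `H^n f : H^n X ⟶ H^n Y` induced by `f : X ⟶ Y` on the homology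
objects, encoded by its defining compatibilities. -/
structure HomologyMapData (U : Set T) (n : ℤ) {X Y : T} (f : X ⟶ Y)
    (dX : HomologyData T U n X) (dY : HomologyData T U n Y) where
  g : dX.t.low ⟶ dY.t.low
  hg : g ≫ dY.t.ι = dX.t.ι ≫ f
  h : dX.s.high ⟶ dY.s.high
  hh : dX.s.π ≫ h = g ≫ dY.s.π

/-- A truncation triangle at level `n`, with respect to the left aisle `U`, inside
the subcategory `T_c` of compact objects. -/
structure CTruncTriangle (U : Set T) (n : ℤ) (X : T) where
  low : T
  high : T
  ι : low ⟶ X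
  π : X ⟶ high
  δ : high ⟶ low⟦(1 : ℤ)⟧
  low_mem : low⟦n⟧ ∈ U
  high_compact : IsCompactObj T high
  high_orth : ∀ Z : T, Z⟦n⟧ ∈ U → ∀ f : Z ⟶ high, f = 0
  dist : Triangle.mk ι π δ ∈ (distTriang T)

/-- Data computing the homology `H^n X` with respect to the aisle `U` in `T_c`. -/
structure CHomologyData (U : Set T) (n : ℤ) (X : T) where
  t : CTruncTriangle T U n X
  s : CTruncTriangle T U (n - 1) t.low

/-- The morphism induced by `f` on `U`-homology objects in `T_c`. -/
structure CHomologyMapData (U : Set T) (n : ℤ) {X Y : T} (f : X ⟶ Y)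
    (dX : CHomologyData T U n X) (dY : CHomologyData T U n Y) where
  g : dX.t.low ⟶ dY.t.low
  hg : g ≫ dY.t.ι = dX.t.ι ≫ f
  h : dX.s.high ⟶ dY.s.high
  hh : dX.s.π ≫ h = g ≫ dY.s.π

/-- The left aisle `U ⊆ T_c` is non-degenerate: a morphism `f` of `T_c` is
invertible if and only if `H^p(f)` is invertible for all `p : ℤ`. -/
def UNondegenerate (U : Set T) : Prop :=
  ∀ ⦃X Y : T⦄, IsCompactObj T X → IsCompactObj T Y → ∀ f : X ⟶ Y,
    (IsIso f ↔ ∀ (p : ℤ) (dX : CHomologyData T U p X) (dY : CHomologyData T U p Y)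
      (m : CHomologyMapData T U p f dX dY), IsIso m.h)

/-- Condition (†): for each compact `X` there is an integer `N` such that
`Hom(X, S^N U') = 0` for every `U' ∈ U`. -/
def CondDagger (U : Set T) : Prop :=
  ∀ X : T, IsCompactObj T X → ∃ N : ℤ, ∀ U' ∈ U, ∀ f : X ⟶ U'⟦N⟧, f = 0

/-! ### Auxiliary lemmas -/

section Aux

/-- If `V` is compact and all maps from `V` to the objects of a discrete diagram vanish,
then all maps from `V` to the colimit vanish. -/
lemma zero_of_isColimit_components {J : Type v} {V : T} (hV : IsCompactObj T V)
    {F : Discrete J ⥤ T} {c : Cocone F} (hc : IsColimit c)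
    (h0 : ∀ j (g : V ⟶ F.obj j), g = 0) (f : V ⟶ c.pt) : f = 0 := by
  haveI := hV J
  let G := preadditiveCoyoneda.obj (Opposite.op V)
  have hc' : IsColimit (G.mapCocone c) := isColimitOfPreserves G hc
  have hid : 𝟙 ((G.mapCocone c).pt) = 0 := by
    refine hc'.hom_ext (fun j => ?_)
    have hz : (G.mapCocone c).ι.app j = 0 := by
      ext g
      rw [h0 j g]
      exact (map_zero _).trans rfl
    rw [hz, zero_comp, comp_zero]
  have h1 : (𝟙 ((G.mapCocone c).pt) : (G.mapCocone c).pt ⟶ (G.mapCocone c).pt) f =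
      ((0 : (G.mapCocone c).pt ⟶ (G.mapCocone c).pt)) f := by rw [hid]
  exact h1

/-- The class `aisleGen U` is stable under the suspension, provided `U` is. -/
lemma aisleGen_shift₁ {U : Set T} (hU : ∀ Y ∈ U, Y⟦(1 : ℤ)⟧ ∈ U) {X : T}
    (h : aisleGen T U X) : aisleGen T U (X⟦(1 : ℤ)⟧) := by
  induction h with
  | of X hX => exact .of _ (hU X hX)
  | iso X Y e hX ih => exact .iso _ _ ((shiftFunctor T (1 : ℤ)).mapIso e) ih
  | coprod Yf hYf ih =>
    exact .iso _ _ (asIso (sigmaComparison (shiftFunctor T (1 : ℤ)) Yf)) (.coprod _ ih)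
  | ext Tr hTr h₁ h₃ ih₁ ih₃ =>
    exact .ext (Tr.rotate.rotate.rotate)
      (rot_of_distTriang _ (rot_of_distTriang _ (rot_of_distTriang _ hTr))) ih₁ ih₃

/-- `T_{≤ n}` is stable under the suspension. -/
lemma TLe_shift (U : LeftAisle T (Compacts T)) (n : ℤ) {X : T}
    (h : X ∈ TLe T U.carrier n) : X⟦(1 : ℤ)⟧ ∈ TLe T U.carrier n := by
  have h' : aisleGen T U.carrier ((X⟦n⟧)⟦(1 : ℤ)⟧) :=
    aisleGen_shift₁ T (fun Y hY => U.shift_mem Y hY) h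
  exact aisleGen.iso _ _ (shiftComm X n 1) h'

/-- Maps from `T_{≤n}` into the desuspension of `T_{>n}` vanish. -/
lemma to_shift_neg_one_zero (U : LeftAisle T (Compacts T)) (n : ℤ) {R B : T}
    (hR : R ∈ TLe T U.carrier n) (hB : B ∈ TGt T U.carrier n)
    (v : R ⟶ B⟦(-1 : ℤ)⟧) : v = 0 := by
  have h1 : R⟦(1 : ℤ)⟧ ∈ TLe T U.carrier n := TLe_shift T U n hR
  have h2 : (shiftFunctor T (1 : ℤ)).map v ≫
      ((shiftFunctorCompIsoId T (-1 : ℤ) (1 : ℤ) (by omega)).hom.app B) = 0 :=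
    hB _ h1 _
  have h3 : (shiftFunctor T (1 : ℤ)).map v = 0 := by
    rw [← cancel_mono ((shiftFunctorCompIsoId T (-1 : ℤ) (1 : ℤ) (by omega)).hom.app B),
      zero_comp]
    exact h2
  exact (shiftFunctor T (1 : ℤ)).map_injective (by rw [h3, Functor.map_zero])

/-- For a triangle `A ⟶ X ⟶ B ⟶ A⟦1⟧` with `B ∈ T_{>n}`, composition with `A ⟶ X`
is bijective on maps from any object of `T_{≤n}`. -/
lemma trunc_bij (U : LeftAisle T (Compacts T)) (n : ℤ) (Tr : Triangle T)
    (hdist : Tr ∈ distTriang T) (hB : Tr.obj₃ ∈ TGt T U.carrier n)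
    {R : T} (hR : R ∈ TLe T U.carrier n) :
    Function.Bijective (fun g : R ⟶ Tr.obj₁ => g ≫ Tr.mor₁) := by
  constructor
  · intro g₁ g₂ hg
    simp only at hg
    have hu : (g₁ - g₂) ≫ Tr.mor₁ = 0 := by rw [Preadditive.sub_comp, hg, sub_self]
    obtain ⟨v, hv⟩ := Triangle.coyoneda_exact₂ _ (inv_rot_of_distTriang _ hdist) (g₁ - g₂) hu
    have hv0 : v = 0 := to_shift_neg_one_zero T U n hR hB v
    rw [hv0, zero_comp] at hv
    exact sub_eq_zero.mp hv
  · intro a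
    obtain ⟨g, hgg⟩ := Triangle.coyoneda_exact₂ _ hdist a (hB R hR (a ≫ Tr.mor₂))
    exact ⟨g, hgg.symm⟩

/-- `T_{≤n}` is stable under coproducts. -/
lemma coprod_mem_TLe (U : Set T) (n : ℤ) {I : Type v} (L : I → T)
    (hL : ∀ p, L p ∈ TLe T U n) : (∐ L) ∈ TLe T U n := by
  have h1 : aisleGen T U (∐ fun p => (L p)⟦n⟧) := aisleGen.coprod _ (fun p => hL p)
  exact aisleGen.iso _ _ (asIso (sigmaComparison (shiftFunctor T n) L)) h1

/-- `T_{>n}` is stable under coproducts (this is where compactness of the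
generators of the aisle is used). -/
lemma coprod_mem_TGt (U : LeftAisle T (Compacts T)) (n : ℤ) {I : Type v} (H : I → T)
    (hH : ∀ p, H p ∈ TGt T U.carrier n) : (∐ H) ∈ TGt T U.carrier n := by
  have key : ∀ V : T, aisleGen T U.carrier V → ∀ g : V ⟶ (∐ H)⟦n⟧, g = 0 := by
    intro V hV
    induction hV with
    | of V hVU =>
      intro g
      refine zero_of_isColimit_components T (U.subset hVU)
        (isColimitOfPreserves (shiftFunctor T n) (colimit.isColimit (Discrete.functor H))) ?_ g
      intro j g'
      have hVle : aisleGen T U.carrier ((V⟦(-n : ℤ)⟧)⟦n⟧) :=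
        aisleGen.iso _ _ ((shiftFunctorCompIsoId T (-n : ℤ) n (by omega)).symm.app V)
          (aisleGen.of _ hVU)
      have hz : (shiftFunctor T (-n : ℤ)).map g' ≫
          ((shiftFunctorCompIsoId T n (-n : ℤ) (by omega)).hom.app (H j.as)) = 0 :=
        hH j.as _ hVle _
      have hg'' : (shiftFunctor T (-n : ℤ)).map g' = 0 := by
        rw [← cancel_mono ((shiftFunctorCompIsoId T n (-n : ℤ) (by omega)).hom.app (H j.as)),
          zero_comp]
        exact hz
      exact (shiftFunctor T (-n : ℤ)).map_injective (by rw [hg'', Functor.map_zero])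
    | iso X Y e hX ih =>
      intro g
      rw [← cancel_epi e.hom, comp_zero]
      exact ih _
    | coprod Yf hYf ih =>
      intro g
      apply colimit.hom_ext
      intro j
      rw [comp_zero]
      exact ih j.as _
    | ext Tr hTr h₁ h₃ ih₁ ih₃ =>
      intro g
      obtain ⟨g', hg'⟩ := Triangle.yoneda_exact₂ Tr hTr g (ih₁ _)
      rw [hg', ih₃ g', comp_zero]
  intro Z hZ f
  have h := key (Z⟦n⟧) hZ ((shiftFunctor T n).map f)
  exact (shiftFunctor T n).map_injective (by rw [h, Functor.map_zero])

/-- The coproduct of a family of triangles. -/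
noncomputable def coproductTriangle {I : Type v} (Tri : I → Triangle T) : Triangle T :=
  Triangle.mk (Limits.Sigma.map fun j => (Tri j).mor₁) (Limits.Sigma.map fun j => (Tri j).mor₂)
    (Sigma.desc fun j => (Tri j).mor₃ ≫ (Sigma.ι (fun i => (Tri i).obj₁) j)⟦(1 : ℤ)⟧')

lemma shift_ι_comp_inv_sigmaComparison {I : Type v} (f : I → T) (m : ℤ) (j : I) :
    (Sigma.ι f j)⟦m⟧' ≫ inv (sigmaComparison (shiftFunctor T m) f) =
      Sigma.ι (fun i => (f i)⟦m⟧) j := by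
  rw [IsIso.comp_inv_eq, ι_comp_sigmaComparison]

/-- A coproduct of distinguished triangles is distinguished. -/
lemma coproductTriangle_distinguished {I : Type v} (Tri : I → Triangle T)
    (hTri : ∀ j, Tri j ∈ distTriang T) :
    coproductTriangle T Tri ∈ distTriang T := by
  obtain ⟨Z, f₂, f₃, hT'⟩ := distinguished_cocone_triangle (Limits.Sigma.map fun j => (Tri j).mor₁)
  let T' := Triangle.mk (Limits.Sigma.map fun j => (Tri j).mor₁) f₂ f₃
  change T' ∈ distTriang T at hT'
  let φ : ∀ j, Tri j ⟶ T' := fun j => completeDistinguishedTriangleMorphism (Tri j) T'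
    (hTri j) hT' (Sigma.ι (fun i => (Tri i).obj₁) j) (Sigma.ι (fun i => (Tri i).obj₂) j) (by exact (Sigma.ι_map (fun j => (Tri j).mor₁) j).symm)
  have hφ₁ : ∀ j, (φ j).hom₁ = Sigma.ι (fun i => (Tri i).obj₁) j := fun j => rfl
  have hφ₂ : ∀ j, (φ j).hom₂ = Sigma.ι (fun i => (Tri i).obj₂) j := fun j => rfl
  have hcomm₂ : (coproductTriangle T Tri).mor₂ ≫ (Sigma.desc fun j => (φ j).hom₃) = T'.mor₂ := by
    apply Sigma.hom_ext
    intro j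
    have h := (φ j).comm₂
    rw [hφ₂ j] at h
    simp [coproductTriangle, h]
    erw [Sigma.ι_map_assoc, Sigma.ι_desc]; exact h
  have hcomm₃ : (coproductTriangle T Tri).mor₃ = (Sigma.desc fun j => (φ j).hom₃) ≫ T'.mor₃ := by
    apply Sigma.hom_ext
    intro j
    have h := (φ j).comm₃
    rw [hφ₁ j] at h
    simp [coproductTriangle, h]
    erw [Sigma.ι_desc, Sigma.ι_desc_assoc]; exact h
  have hcomm₂' : ((Limits.Sigma.map fun j => (Tri j).mor₂) ≫ Sigma.desc fun j => (φ j).hom₃) =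
      T'.mor₂ := hcomm₂
  have hzero : (Limits.Sigma.map fun j => (Tri j).mor₁) ≫ (Limits.Sigma.map fun j => (Tri j).mor₂) = 0 := by
    rw [Limits.Sigma.map_comp_map]
    apply Sigma.hom_ext
    intro j
    simp [comp_distTriang_mor_zero₁₂ _ (hTri j)]
  suffices h3 : IsIso (Sigma.desc fun j => (φ j).hom₃) by
    let ψ : coproductTriangle T Tri ⟶ T' :=
      { hom₁ := 𝟙 _
        hom₂ := 𝟙 _
        hom₃ := Sigma.desc fun j => (φ j).hom₃
        comm₁ := by exact (Category.comp_id _).trans (Category.id_comp _).symm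
        comm₂ := by exact hcomm₂.trans (Category.id_comp _).symm
        comm₃ := by
            show (coproductTriangle T Tri).mor₃ ≫ (shiftFunctor T (1 : ℤ)).map (𝟙 (coproductTriangle T Tri).obj₁) = _
            exact ((congrArg (fun x => (coproductTriangle T Tri).mor₃ ≫ x)
              ((shiftFunctor T (1 : ℤ)).map_id _)).trans (Category.comp_id _)).trans hcomm₃ }
    have hψ : IsIso ψ := by
      apply Triangle.isIso_of_isIsos
      · exact (inferInstance : IsIso (𝟙 (∐ fun i => (Tri i).obj₁)))
      · exact (inferInstance : IsIso (𝟙 (∐ fun i => (Tri i).obj₂)))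
      · exact h3
    exact isomorphic_distinguished _ hT' _ (asIso ψ)
  refine isIso_of_coyoneda_map_bijective _ (fun A => ⟨?_, ?_⟩)
  · -- injectivity
    intro t₁ t₂ h12
    simp only at h12
    rw [← sub_eq_zero]
    set f := t₁ - t₂ with hfdef
    have hdd : (Sigma.desc fun j => (φ j).hom₃) ≫ f = 0 := by
      rw [hfdef, Preadditive.comp_sub, h12, sub_self]
    have h1 : T'.mor₂ ≫ f = 0 := by
      erw [← hcomm₂, Category.assoc, hdd, comp_zero]
    obtain ⟨g, hg⟩ := Triangle.yoneda_exact₃ T' hT' f h1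
    have h2 : (coproductTriangle T Tri).mor₃ ≫ g = 0 := by
      erw [hcomm₃, Category.assoc, ← hg]
      exact hdd
    have h3 : ∀ j, (Tri j).mor₃ ≫ ((Sigma.ι (fun i => (Tri i).obj₁) j)⟦(1 : ℤ)⟧' ≫ g) = 0 := by
      intro j
      have := Sigma.ι (fun i => (Tri i).obj₃) j ≫= h2
      erw [Sigma.ι_desc_assoc] at this
      exact (Category.assoc _ _ _).symm.trans (this.trans comp_zero)
    have h4 : ∀ j, ∃ gj : ((Tri j).obj₂)⟦(1 : ℤ)⟧ ⟶ A,
        (Sigma.ι (fun i => (Tri i).obj₁) j)⟦(1 : ℤ)⟧' ≫ g =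
          (-(((Tri j).mor₁)⟦(1 : ℤ)⟧')) ≫ gj := fun j =>
      Triangle.yoneda_exact₃ _ (rot_of_distTriang _ (hTri j)) _ (h3 j)
    choose gj hgj using h4
    let G : ((∐ fun i => (Tri i).obj₂)⟦(1 : ℤ)⟧ : T) ⟶ A :=
      inv (sigmaComparison (shiftFunctor T (1 : ℤ)) (fun i => (Tri i).obj₂)) ≫
        Sigma.desc fun j => -(gj j)
    have hgG : g = ((Limits.Sigma.map fun j => (Tri j).mor₁))⟦(1 : ℤ)⟧' ≫ G := by
      erw [← cancel_epi (sigmaComparison (shiftFunctor T (1 : ℤ)) (fun i => (Tri i).obj₁))]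
      apply Sigma.hom_ext
      intro j
      erw [ι_comp_sigmaComparison_assoc, ι_comp_sigmaComparison_assoc, ← Functor.map_comp_assoc]
      have : Sigma.ι (fun i => (Tri i).obj₁) j ≫ (Limits.Sigma.map fun j => (Tri j).mor₁) =
          (Tri j).mor₁ ≫ Sigma.ι (fun i => (Tri i).obj₂) j := by simp
      rw [this, Functor.map_comp, Category.assoc, hgj j]
      show _ = (((Tri j).mor₁)⟦(1 : ℤ)⟧') ≫ ((Sigma.ι (fun i => (Tri i).obj₂) j)⟦(1 : ℤ)⟧' ≫ G)
      rw [show (Sigma.ι (fun i => (Tri i).obj₂) j)⟦(1 : ℤ)⟧' ≫ G = -(gj j) by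
        rw [← Category.assoc, shift_ι_comp_inv_sigmaComparison, colimit.ι_desc]; rfl]
      simp
    erw [hg, hgG, ← Category.assoc]
    have : T'.mor₃ ≫ ((Limits.Sigma.map fun j => (Tri j).mor₁))⟦(1 : ℤ)⟧' = 0 :=
      comp_distTriang_mor_zero₃₁ _ hT'
    erw [this, zero_comp]
  · -- surjectivity
    intro a
    have hf0 : (Limits.Sigma.map fun j => (Tri j).mor₁) ≫ ((Limits.Sigma.map fun j => (Tri j).mor₂) ≫ a) = 0 := by
      rw [← Category.assoc, hzero, zero_comp]
    obtain ⟨a', ha'⟩ := Triangle.yoneda_exact₂ T' hT' ((Limits.Sigma.map fun j => (Tri j).mor₂) ≫ a) hf0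
    have h4 : ∀ j, ∃ gj : ((Tri j).obj₁)⟦(1 : ℤ)⟧ ⟶ A,
        Sigma.ι (fun i => (Tri i).obj₃) j ≫
          (a - (Sigma.desc fun j => (φ j).hom₃) ≫ a') = (Tri j).mor₃ ≫ gj := by
      intro j
      refine Triangle.yoneda_exact₃ _ (hTri j) _ ?_
      rw [← Category.assoc]
      have hι : (Tri j).mor₂ ≫ Sigma.ι (fun i => (Tri i).obj₃) j =
          Sigma.ι (fun i => (Tri i).obj₂) j ≫ (Limits.Sigma.map fun j => (Tri j).mor₂) := by simp
      erw [hι, Category.assoc, Preadditive.comp_sub, ← Category.assoc _ _ a', hcomm₂', ha']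
      exact (congrArg _ (sub_self _)).trans comp_zero
    choose gj hgj using h4
    let G : ((∐ fun i => (Tri i).obj₁)⟦(1 : ℤ)⟧ : T) ⟶ A :=
      inv (sigmaComparison (shiftFunctor T (1 : ℤ)) (fun i => (Tri i).obj₁)) ≫
        Sigma.desc fun j => gj j
    have hGι : ∀ j, (Sigma.ι (fun i => (Tri i).obj₁) j)⟦(1 : ℤ)⟧' ≫ G = gj j := by
      intro j
      rw [← Category.assoc, shift_ι_comp_inv_sigmaComparison, colimit.ι_desc]
      rfl
    have hu : a - (Sigma.desc fun j => (φ j).hom₃) ≫ a' =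
        (coproductTriangle T Tri).mor₃ ≫ G := by
      apply Sigma.hom_ext
      intro j
      rw [hgj j]
      have : Sigma.ι (fun i => (Tri i).obj₃) j ≫ (coproductTriangle T Tri).mor₃ =
          (Tri j).mor₃ ≫ (Sigma.ι (fun i => (Tri i).obj₁) j)⟦(1 : ℤ)⟧' := by
        simp [coproductTriangle]
        exact Sigma.ι_desc _ _
      erw [← Category.assoc, this, Category.assoc, hGι j]
    refine ⟨a' + T'.mor₃ ≫ G, ?_⟩
    have := hu
    erw [sub_eq_iff_eq_add] at this
    simp only []
    erw [Preadditive.comp_add, this, hcomm₃, Category.assoc]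
    abel

end Aux

/-- Key step of Lemma A.2: the truncation functors `τ_{≤n}` associated with the
extended aisle `T_{≤0}` commute with arbitrary coproducts: the canonical morphism
`⊕_p τ_{≤n} Y_p ⟶ τ_{≤n} (⊕_p Y_p)` (the unique morphism compatible with the
counits of the truncations) is an isomorphism. -/
theorem stmt5 (hT : CompactlyGenerated T) (U : LeftAisle T (Compacts T))
    (n : ℤ) (I : Type v) (Y : I → T)
    (d : ∀ p : I, TruncTriangle T U.carrier n (Y p))
    (e : TruncTriangle T U.carrier n (∐ Y))
    (φ : (∐ fun p => (d p).low) ⟶ e.low)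
    (hφ : ∀ p : I, Sigma.ι (fun q => (d q).low) p ≫ φ ≫ e.ι = (d p).ι ≫ Sigma.ι Y p) :
    IsIso φ := by
  classical
  let cT := coproductTriangle T (fun p => Triangle.mk (d p).ι (d p).π (d p).δ)
  have hcT : cT ∈ distTriang T := coproductTriangle_distinguished T _ (fun p => (d p).dist)
  have hlow : (∐ fun p => (d p).low) ∈ TLe T U.carrier n :=
    coprod_mem_TLe T U.carrier n _ (fun p => (d p).low_mem)
  have hhigh : cT.obj₃ ∈ TGt T U.carrier n :=
    coprod_mem_TGt T U n _ (fun p => (d p).high_mem)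
  have hm : φ ≫ e.ι = cT.mor₁ := by
    apply Sigma.hom_ext
    intro p
    rw [hφ p]
    simp [cT, coproductTriangle]
    exact (Sigma.ι_map (fun j => (d j).ι) p).symm
  -- bijectivity of composition with `cT.mor₁` on maps from `T_{≤n}`
  have bij_cT : ∀ R : T, R ∈ TLe T U.carrier n →
      Function.Bijective (fun g : R ⟶ cT.obj₁ => g ≫ cT.mor₁) :=
    fun R hR => trunc_bij T U n cT hcT hhigh hR
  let eT : Triangle T := Triangle.mk e.ι e.π e.δ
  have bij_e : ∀ R : T, R ∈ TLe T U.carrier n →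
      Function.Bijective (fun g : R ⟶ eT.obj₁ => g ≫ eT.mor₁) :=
    fun R hR => trunc_bij T U n eT e.dist e.high_mem hR
  obtain ⟨ψ, hψ⟩ := (bij_cT e.low e.low_mem).2 e.ι
  simp only at hψ
  have hφψ : φ ≫ ψ = 𝟙 _ := by
    apply (bij_cT _ hlow).1
    show (φ ≫ ψ) ≫ cT.mor₁ = 𝟙 _ ≫ cT.mor₁
    erw [Category.assoc, hψ, hm, Category.id_comp]
  have hψφ : ψ ≫ φ = 𝟙 _ := by
    apply (bij_e _ e.low_mem).1
    show (ψ ≫ φ) ≫ eT.mor₁ = 𝟙 _ ≫ eT.mor₁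
    show (ψ ≫ φ) ≫ e.ι = 𝟙 _ ≫ e.ι
    erw [Category.assoc, hm, hψ, Category.id_comp]
  exact ⟨ψ, hφψ, hψφ⟩

end CYPaper
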